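/- Let A be an m-th order n-dimensional tensor. If A is spectral ℓ-symmetric (i.e. Spec(A) = e^{i2π/ℓ}·Spec(A) as multisets) and c(A) is the cyclic index of A (the maximum k such that Spec(A) = e^{i2π/k}·Spec(A)), then ℓ divides c(A). -/

import Mathlib

open BigOperators

/-- An order-`m`, dimension-`n` real tensor (hypermatrix). -/
abbrev Tensor (m n : ℕ) : Type := (Fin m → Fin n) → ℝ

/-- The primitive rotation `e^{i·2π/k}` of the complex plane. -/
noncomputable def rot (k : ℕ) : ℂ := Complex.exp (2 * (Real.pi : ℂ) * Complex.I / (k : ℂ))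

/-- A tensor is nonnegative if all its entries are nonnegative. -/
def Tensor.Nonneg {m n : ℕ} (A : Tensor m n) : Prop := ∀ α, 0 ≤ A α

/-- A tensor is symmetric if its entries are invariant under permutations of indices. -/
def Tensor.Symm {m n : ℕ} (A : Tensor m n) : Prop :=
  ∀ (σ : Equiv.Perm (Fin m)) (α : Fin m → Fin n), A (α ∘ σ) = A α

/-- Arc `(i,j)` of the digraph associated to `A`: some entry `a_{i i₂ … i_m} ≠ 0`
with `j` among the later indices. -/
def Tensor.Arc {m n : ℕ} [NeZero m] (A : Tensor m n) (i j : Fin n) : Prop :=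
  ∃ α : Fin m → Fin n, A α ≠ 0 ∧ α 0 = i ∧ ∃ k : Fin m, k ≠ 0 ∧ α k = j

/-- `A` is weakly irreducible if its associated digraph is strongly connected. -/
def Tensor.WeaklyIrreducible {m n : ℕ} [NeZero m] (A : Tensor m n) : Prop :=
  ∀ i j : Fin n, Relation.ReflTransGen A.Arc i j

/-- The eigenvalue equations `(A x^{m-1})_i = λ x_i^{m-1}` for all `i`. -/
def Tensor.EigEq {m n : ℕ} [NeZero m] (A : Tensor m n) (lam : ℂ) (x : Fin n → ℂ) : Prop :=
  ∀ i : Fin n,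
    (∑ α : Fin m → Fin n,
      if α 0 = i then (A α : ℂ) * ∏ k ∈ Finset.univ.erase (0 : Fin m), x (α k) else 0)
    = lam * x i ^ (m - 1)

/-- `lam` is an eigenvalue of the tensor `A`. -/
def Tensor.IsEig {m n : ℕ} [NeZero m] (A : Tensor m n) (lam : ℂ) : Prop :=
  ∃ x : Fin n → ℂ, x ≠ 0 ∧ A.EigEq lam x

/-- `A` is spectral `ℓ`-symmetric: its spectrum is invariant under rotation by `e^{i2π/ℓ}`. -/
def Tensor.SpectralSym {m n : ℕ} [NeZero m] (ℓ : ℕ) (A : Tensor m n) : Prop :=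
  ∀ lam : ℂ, A.IsEig lam ↔ A.IsEig (rot ℓ * lam)

/-- `A = e^{-iθ} D^{-(m-1)} A D` for the diagonal matrix `D = diag d`, entrywise. -/
def Tensor.DiagSim {m n : ℕ} [NeZero m] (A : Tensor m n) (θ : ℝ) (d : Fin n → ℂ) : Prop :=
  ∀ α : Fin m → Fin n,
    (A α : ℂ) = Complex.exp (-(θ : ℂ) * Complex.I) * d (α 0) ^ (-((m : ℤ) - 1)) * (A α : ℂ) *
      ∏ k ∈ Finset.univ.erase (0 : Fin m), d (α k)

/-- The set `𝔇^{(j)}` of normalized unimodular diagonal matrices `D` with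
`A = e^{-i2πj/ℓ} D^{-(m-1)} A D`. -/
def Tensor.DSet {m n : ℕ} [NeZero m] [NeZero n] (A : Tensor m n) (ℓ j : ℕ) :
    Set (Fin n → ℂ) :=
  {d | d 0 = 1 ∧ (∀ i, ‖d i‖ = 1) ∧ A.DiagSim (2 * Real.pi * j / ℓ) d}

/-- The set `𝔇 = ⋃_{j=0}^{ℓ-1} 𝔇^{(j)}`. -/
def Tensor.DFull {m n : ℕ} [NeZero m] [NeZero n] (A : Tensor m n) (ℓ : ℕ) :
    Set (Fin n → ℂ) :=
  ⋃ j ∈ Finset.range ℓ, A.DSet ℓ j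

/-- An `m`-uniform hypergraph on vertex set `Fin n`. -/
structure UHypergraph (m n : ℕ) where
  edges : Finset (Finset (Fin n))
  uniform : ∀ e ∈ edges, e.card = m

/-- The adjacency tensor of an `m`-uniform hypergraph. -/
noncomputable def UHypergraph.adjTensor {m n : ℕ} (G : UHypergraph m n) : Tensor m n :=
  fun α => if Finset.image α Finset.univ ∈ G.edges then (1 : ℝ) / (m - 1).factorial else 0

/-- A hypergraph is connected if every two vertices are joined by a walk. -/
def UHypergraph.Connected {m n : ℕ} (G : UHypergraph m n) : Prop :=
  ∀ i j : Fin n, Relation.ReflTransGen (fun u v => ∃ e ∈ G.edges, u ∈ e ∧ v ∈ e) i j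

/-- If a tensor `A` (with spectrum `spec`, the multiset of roots of its
characteristic polynomial, of cardinality `n(m-1)^{n-1}`) is spectral `ℓ`-symmetric and
`c` is its cyclic index (the greatest `k` with `Spec(A) = e^{i2π/k}·Spec(A)`), then `ℓ ∣ c`. -/
lemma spec_mul (spec : Multiset ℂ) (θ θ' : ℂ)
    (h : spec.map (fun z => θ * z) = spec) (h' : spec.map (fun z => θ' * z) = spec) :
    spec.map (fun z => (θ * θ') * z) = spec := by
  have : (fun z => (θ * θ') * z) = (fun z => θ * z) ∘ (fun z => θ' * z) := by
    funext z; simp [mul_assoc]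
  rw [this, ← Multiset.map_map, h', h]

lemma spec_pow (spec : Multiset ℂ) (θ : ℂ)
    (h : spec.map (fun z => θ * z) = spec) (n : ℕ) :
    spec.map (fun z => θ ^ n * z) = spec := by
  induction n with
  | zero => simp
  | succ k ih =>
      have := spec_mul spec θ (θ ^ k) h ih
      rwa [← pow_succ'] at this

lemma spec_inv (spec : Multiset ℂ) (θ : ℂ) (hθ : θ ≠ 0)
    (h : spec.map (fun z => θ * z) = spec) :
    spec.map (fun z => θ⁻¹ * z) = spec := by
  conv_lhs => rw [← h]
  rw [Multiset.map_map]
  have : ((fun z => θ⁻¹ * z) ∘ (fun z => θ * z)) = id := by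
    funext z; simp [← mul_assoc, inv_mul_cancel₀ hθ]
  rw [this, Multiset.map_id]

lemma spec_zpow (spec : Multiset ℂ) (θ : ℂ) (hθ : θ ≠ 0)
    (h : spec.map (fun z => θ * z) = spec) (a : ℤ) :
    spec.map (fun z => θ ^ a * z) = spec := by
  rcases a.eq_nat_or_neg with ⟨k, rfl | rfl⟩
  · rw [zpow_natCast]; exact spec_pow spec θ h k
  · rw [zpow_neg, zpow_natCast]
    exact spec_inv spec _ (pow_ne_zero _ hθ) (spec_pow spec θ h k)

theorem stmt0 {m n ℓ c : ℕ} (A : Tensor m n) (spec : Multiset ℂ)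
    (hcard : Multiset.card spec = n * (m - 1) ^ (n - 1))
    (hℓ : 0 < ℓ)
    (hsym : spec.map (fun z => rot ℓ * z) = spec)
    (hc : IsGreatest {k : ℕ | 0 < k ∧ spec.map (fun z => rot k * z) = spec} c) :
    ℓ ∣ c := by
  obtain ⟨⟨hcpos, hcspec⟩, hmax⟩ := hc
  set L := Nat.lcm ℓ c with hLdef
  have hLpos : 0 < L := Nat.lcm_pos hℓ hcpos
  suffices hPL : spec.map (fun z => rot L * z) = spec by
    have h1 : L ≤ c := hmax ⟨hLpos, hPL⟩
    have h2 : c ≤ L := Nat.le_of_dvd hLpos (Nat.dvd_lcm_right ℓ c)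
    have : L = c := le_antisymm h1 h2
    exact this ▸ Nat.dvd_lcm_left ℓ c
  have hrotne : ∀ k : ℕ, rot k ≠ 0 := fun k => Complex.exp_ne_zero _
  set a := Nat.gcdA ℓ c with ha
  set b := Nat.gcdB ℓ c with hb
  have hbez : (Nat.gcd ℓ c : ℤ) = ℓ * a + c * b := Nat.gcd_eq_gcd_ab ℓ c
  have hgl : (Nat.gcd ℓ c) * L = ℓ * c := Nat.gcd_mul_lcm ℓ c
  have hℓ0 : (ℓ : ℂ) ≠ 0 := Nat.cast_ne_zero.mpr hℓ.ne'
  have hc0 : (c : ℂ) ≠ 0 := Nat.cast_ne_zero.mpr hcpos.ne'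
  have hL0 : (L : ℂ) ≠ 0 := Nat.cast_ne_zero.mpr hLpos.ne'
  have hrotL : rot L = rot ℓ ^ b * rot c ^ a := by
    rw [rot, rot, rot, ← Complex.exp_int_mul, ← Complex.exp_int_mul, ← Complex.exp_add]
    congr 1
    have hbezC : (Nat.gcd ℓ c : ℂ) = ℓ * a + c * b := by
      exact_mod_cast congrArg (Int.cast : ℤ → ℂ) hbez
    have hglC : (Nat.gcd ℓ c : ℂ) * L = ℓ * c := by exact_mod_cast hgl
    field_simp
    linear_combination (L : ℂ) * hbezC - hglC
  rw [hrotL]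
  exact spec_mul spec _ _ (spec_zpow spec _ (hrotne ℓ) hsym b) (spec_zpow spec _ (hrotne c) hcspec a)
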